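/- For every (z₁,z₂,z₃) ∈ ℍ³, the point ψ(z₁,z₂,z₃) lies in 𝒰, and the gradient ∇S vanishes at ψ(z₁,z₂,z₃) if and only if the three equations (E1) Log z₃ = Log z₁″ + Log z₂′, (E2) Log z₃ = Log z₁ - Log z₂″, and (E3) Log z₁ + Log z₂′ + 3·Log z₃′ = 2πi hold. -/

import Mathlib

open Real MeasureTheory Metric Set

/-- The dilogarithm `Li₂(z) = -∫₀¹ Log(1 - z t)/t dt`. -/
noncomputable def Li2 (z : ℂ) : ℂ :=
  -∫ t in (0:ℝ)..1, Complex.log (1 - z * (t : ℂ)) / (t : ℂ)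

lemma Li2_hasDerivAt {w : ℂ} (hw : w.im ≠ 0) :
    HasDerivAt Li2 (-Complex.log (1 - w) / w) w := by
  have hw0 : w ≠ 0 := fun h => hw (by simp [h])
  set ε : ℝ := |w.im| / 2 with hε
  have hεpos : 0 < ε := by positivity
  set M : ℝ := ‖w‖ + ε with hM
  have hMpos : 0 < M := by positivity
  set c : ℝ := min (1/2) (ε / (2 * M)) with hc
  have hcpos : 0 < c := by
    apply lt_min (by norm_num); positivity
  -- lower bound on |x.im| on the ball
  have him : ∀ x ∈ ball w ε, ε ≤ |x.im| := by
    intro x hx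
    have h1 : |x.im - w.im| ≤ ‖x - w‖ := by
      simpa using Complex.abs_im_le_norm (x - w)
    have h2 : ‖x - w‖ < ε := mem_ball_iff_norm.mp hx
    have : |w.im| - |x.im| ≤ |x.im - w.im| := by
      rw [abs_sub_comm]; exact abs_sub_abs_le_abs_sub _ _
    have : |w.im| ≤ |x.im| + ε := by linarith
    have h2ε : |w.im| = 2 * ε := by rw [hε]; ring
    linarith
  have hnorm : ∀ x ∈ ball w ε, ‖x‖ ≤ M := by
    intro x hx
    have h2 : ‖x - w‖ < ε := mem_ball_iff_norm.mp hx
    calc ‖x‖ = ‖w + (x - w)‖ := by ring_nf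
    _ ≤ ‖w‖ + ‖x - w‖ := norm_add_le _ _
    _ ≤ M := by rw [hM]; linarith
  -- lower bound on |1 - x t|
  have hlow : ∀ x ∈ ball w ε, ∀ t ∈ Set.Ioc (0:ℝ) 1, c ≤ ‖1 - x * (t:ℂ)‖ := by
    intro x hx t ht
    rcases le_or_gt t (1 / (2 * M)) with h | h
    · have hxt : ‖x * (t:ℂ)‖ ≤ 1/2 := by
        rw [norm_mul, Complex.norm_real, Real.norm_eq_abs, abs_of_pos ht.1]
        calc ‖x‖ * t ≤ M * (1 / (2*M)) := by
              apply mul_le_mul (hnorm x hx) h ht.1.le hMpos.le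
        _ = 1/2 := by field_simp
      have h1 : ‖(1:ℂ)‖ - ‖x * (t:ℂ)‖ ≤ ‖1 - x * (t:ℂ)‖ := norm_sub_norm_le _ _
      have hn1 : ‖(1:ℂ)‖ = 1 := norm_one
      exact le_trans (min_le_left _ _) (by rw [hn1] at h1; linarith)
    · have h1 : |(1 - x * (t:ℂ)).im| ≤ ‖1 - x * (t:ℂ)‖ := Complex.abs_im_le_norm _
      have h2 : (1 - x * (t:ℂ)).im = -(x.im * t) := by simp
      have h3 : ε / (2 * M) ≤ |x.im * t| := by
        rw [abs_mul, abs_of_pos ht.1]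
        calc ε / (2*M) = ε * (1/(2*M)) := by ring
        _ ≤ |x.im| * t := by
              apply mul_le_mul (him x hx) h.le (by positivity) (abs_nonneg _)
      rw [h2, abs_neg] at h1
      exact le_trans (min_le_right _ _) (le_trans h3 h1)
  have hslit : ∀ x ∈ ball w ε, ∀ t ∈ Set.Ioc (0:ℝ) 1, (1 - x * (t:ℂ)) ∈ Complex.slitPlane := by
    intro x hx t ht
    rw [Complex.mem_slitPlane_iff]
    right
    have h2 : (1 - x * (t:ℂ)).im = -(x.im * t) := by simp
    rw [h2]
    have h4 : ε ≤ |x.im| := him x hx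
    have hx0 : x.im ≠ 0 := by
      intro h0; rw [h0] at h4; simp at h4; linarith
    exact neg_ne_zero.mpr (mul_ne_zero hx0 ht.1.ne')
  -- slit plane for fixed w on Icc 0 1
  have hwball : w ∈ ball w ε := mem_ball_self hεpos
  have hslitw : ∀ s : ℝ, s ∈ Set.Icc (0:ℝ) 1 → (1 - w * (s:ℂ)) ∈ Complex.slitPlane := by
    intro s hs
    rcases eq_or_lt_of_le hs.1 with h0 | h0
    · rw [Complex.mem_slitPlane_iff]; left
      simp [← h0]
    · exact hslit w hwball s ⟨h0, hs.2⟩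
  -- derivative in t of log (1 - w t)
  have hDt : ∀ s : ℝ, s ∈ Set.Icc (0:ℝ) 1 →
      HasDerivAt (fun s : ℝ => Complex.log (1 - w * (s:ℂ))) ((1 - w * (s:ℂ))⁻¹ * (-w)) s := by
    intro s hs
    have hg : HasDerivAt (fun u : ℂ => 1 - w * u) (-w) (s:ℂ) := by
      simpa using ((hasDerivAt_id (s:ℂ)).const_mul w).const_sub 1
    have hC : HasDerivAt (fun u : ℂ => Complex.log (1 - w * u))
        ((1 - w * (s:ℂ))⁻¹ * (-w)) (s:ℂ) :=
      (Complex.hasDerivAt_log (hslitw s hs)).comp (h := fun u : ℂ => 1 - w * u) (s:ℂ) hg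
    exact hC.comp_ofReal
  -- FTC-based bound on log(1 - w t)
  have hFbd : ∀ t ∈ Set.Ioc (0:ℝ) 1, ‖Complex.log (1 - w * (t:ℂ)) / (t:ℂ)‖ ≤ ‖w‖ / c := by
    intro t ht
    have hFTC : Complex.log (1 - w * (t:ℂ)) =
        ∫ s in (0:ℝ)..t, (1 - w * (s:ℂ))⁻¹ * (-w) := by
      have hsub : Set.uIcc (0:ℝ) t ⊆ Set.Icc 0 1 := by
        rw [Set.uIcc_of_le ht.1.le]
        exact Set.Icc_subset_Icc le_rfl ht.2
      have := intervalIntegral.integral_eq_sub_of_hasDerivAt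
        (f := fun s : ℝ => Complex.log (1 - w * (s:ℂ)))
        (f' := fun s : ℝ => (1 - w * (s:ℂ))⁻¹ * (-w))
        (fun s hs => hDt s (hsub hs)) ?_
      · rw [this]; simp
      · apply ContinuousOn.intervalIntegrable
        apply ContinuousOn.mul ?_ continuousOn_const
        apply ContinuousOn.inv₀
        · fun_prop
        · intro s hs
          exact Complex.slitPlane_ne_zero (hslitw s (hsub hs))
    have hnormint : ‖∫ s in (0:ℝ)..t, (1 - w * (s:ℂ))⁻¹ * (-w)‖ ≤ ‖w‖ / c * |t - 0| := by
      apply intervalIntegral.norm_integral_le_of_norm_le_const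
      intro s hs
      rw [Set.uIoc_of_le ht.1.le] at hs
      have hsIoc : s ∈ Set.Ioc (0:ℝ) 1 := ⟨hs.1, le_trans hs.2 ht.2⟩
      have hlb := hlow w hwball s hsIoc
      rw [norm_mul, norm_neg, norm_inv]
      rw [div_eq_mul_inv, mul_comm]
      gcongr
    rw [norm_div, hFTC]
    have ht0 : ‖(t:ℂ)‖ = t := by
      rw [Complex.norm_real, Real.norm_eq_abs, abs_of_pos ht.1]
    rw [ht0]
    rw [div_le_iff₀ ht.1]
    calc ‖∫ s in (0:ℝ)..t, (1 - w * (s:ℂ))⁻¹ * (-w)‖ ≤ ‖w‖ / c * |t - 0| := hnormint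
    _ = ‖w‖ / c * t := by rw [sub_zero, abs_of_pos ht.1]
  -- integrability of F w
  have hmeas : ∀ x : ℂ, AEStronglyMeasurable (fun t : ℝ => Complex.log (1 - x * (t:ℂ)) / (t:ℂ))
      (volume.restrict (Set.uIoc (0:ℝ) 1)) := by
    intro x
    apply Measurable.aestronglyMeasurable
    exact (Complex.measurable_log.comp (by fun_prop)).div (by fun_prop)
  have hF_int : IntervalIntegrable (fun t : ℝ => Complex.log (1 - w * (t:ℂ)) / (t:ℂ))
      volume 0 1 := by
    rw [intervalIntegrable_iff, Set.uIoc_of_le zero_le_one]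
    apply Measure.integrableOn_of_bounded (M := ‖w‖ / c)
    · exact measure_Ioc_lt_top.ne
    · exact Measurable.aestronglyMeasurable
        ((Complex.measurable_log.comp (by fun_prop)).div (by fun_prop))
    · filter_upwards [ae_restrict_mem measurableSet_Ioc] with t ht
      exact hFbd t ht
  have hbound : ∀ᵐ (t : ℝ), t ∈ Set.uIoc (0:ℝ) 1 → ∀ x ∈ ball w ε,
      ‖-(1 - x * (t:ℂ))⁻¹‖ ≤ c⁻¹ := by
    filter_upwards with t
    intro ht x hx
    rw [norm_neg, norm_inv]
    rw [Set.uIoc_of_le zero_le_one] at ht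
    exact inv_anti₀ hcpos (hlow x hx t ht)
  have hdiff : ∀ᵐ (t : ℝ), t ∈ Set.uIoc (0:ℝ) 1 → ∀ x ∈ ball w ε,
      HasDerivAt (fun x : ℂ => Complex.log (1 - x * (t:ℂ)) / (t:ℂ)) (-(1 - x * (t:ℂ))⁻¹) x := by
    filter_upwards with t
    intro ht x hx
    rw [Set.uIoc_of_le zero_le_one] at ht
    have hg : HasDerivAt (fun x : ℂ => 1 - x * (t:ℂ)) (-(t:ℂ)) x := by
      simpa using ((hasDerivAt_id x).mul_const (t:ℂ)).const_sub 1
    have hC : HasDerivAt (fun x : ℂ => Complex.log (1 - x * (t:ℂ)))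
        ((1 - x * (t:ℂ))⁻¹ * (-(t:ℂ))) x :=
      (Complex.hasDerivAt_log (hslit x hx t ht)).comp (h := fun x : ℂ => 1 - x * (t:ℂ)) x hg
    have h6 := hC.div_const (t:ℂ)
    have ht0 : (t:ℂ) ≠ 0 := by exact_mod_cast ht.1.ne'
    have hA : (1 : ℂ) - x * t ≠ 0 := Complex.slitPlane_ne_zero (hslit x hx t ht)
    refine h6.congr_deriv ?_
    field_simp
  -- apply differentiation under the integral sign
  obtain ⟨-, H⟩ := intervalIntegral.hasDerivAt_integral_of_dominated_loc_of_deriv_le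
    (F := fun x (t : ℝ) => Complex.log (1 - x * (t:ℂ)) / (t:ℂ))
    (F' := fun x (t : ℝ) => -(1 - x * (t:ℂ))⁻¹)
    (bound := fun _ => c⁻¹) (ball_mem_nhds w hεpos)
    (Filter.Eventually.of_forall hmeas) hF_int
    (Measurable.aestronglyMeasurable (by fun_prop))
    hbound intervalIntegrable_const hdiff
  have hLi2 : HasDerivAt Li2 (-(∫ t in (0:ℝ)..1, -(1 - w * (t:ℂ))⁻¹)) w := by
    have : Li2 = fun z => -(∫ t in (0:ℝ)..1, Complex.log (1 - z * (t:ℂ)) / (t:ℂ)) := rfl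
    rw [this]
    exact H.neg
  have hval : (∫ t in (0:ℝ)..1, -(1 - w * (t:ℂ))⁻¹) = Complex.log (1 - w) / w := by
    have hG : ∀ t ∈ Set.uIcc (0:ℝ) 1,
        HasDerivAt (fun s : ℝ => Complex.log (1 - w * (s:ℂ)) / w) (-(1 - w * (t:ℂ))⁻¹) t := by
      intro t ht
      rw [Set.uIcc_of_le zero_le_one] at ht
      have h5 := (hDt t ht).div_const w
      have hA : (1 : ℂ) - w * t ≠ 0 := Complex.slitPlane_ne_zero (hslitw t ht)
      refine h5.congr_deriv ?_
      field_simp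
    have hint : IntervalIntegrable (fun t : ℝ => -(1 - w * (t:ℂ))⁻¹) volume 0 1 := by
      apply ContinuousOn.intervalIntegrable
      rw [Set.uIcc_of_le zero_le_one]
      apply ContinuousOn.neg
      apply ContinuousOn.inv₀ (by fun_prop)
      intro s hs
      exact Complex.slitPlane_ne_zero (hslitw s hs)
    rw [intervalIntegral.integral_eq_sub_of_hasDerivAt hG hint]
    simp
  rw [hval] at hLi2
  simpa [neg_div] using hLi2

lemma Li2_exp_hasDerivAt {y : ℂ} (h : (Complex.exp y).im ≠ 0) :
    HasDerivAt (fun y => Li2 (-Complex.exp y)) (-Complex.log (1 + Complex.exp y)) y := by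
  have hw : (-Complex.exp y).im ≠ 0 := by simpa using h
  have h1 := (Li2_hasDerivAt hw).comp (h := fun y => -Complex.exp y) y (Complex.hasDerivAt_exp y).neg
  have he : Complex.exp y ≠ 0 := Complex.exp_ne_zero y
  refine h1.congr_deriv ?_
  rw [sub_neg_eq_add]
  field_simp

/-- The potential function `S`. -/
noncomputable def pot (y₁ y₂ y₃ : ℂ) : ℂ :=
  Complex.I * (y₁ ^ 2 - y₁ * y₂ + y₂ * y₃ + y₃ ^ 2 / 2) +
    (-(π : ℂ) * y₁ + (π : ℂ) * y₃) +
    Complex.I * Li2 (-Complex.exp y₁) - Complex.I * Li2 (-Complex.exp y₂) +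
    3 * Complex.I * Li2 (-Complex.exp y₃)

lemma pot_hasDerivAt₁ (a b c : ℂ) (h : (Complex.exp a).im ≠ 0) :
    HasDerivAt (fun w => pot w b c)
      (Complex.I * (2 * a - b) - (π:ℂ) - Complex.I * Complex.log (1 + Complex.exp a)) a := by
  have h1 : HasDerivAt (fun w : ℂ => w ^ 2 - w * b + b * c + c ^ 2 / 2) (2 * a - b) a := by
    have := (((hasDerivAt_pow 2 a).sub ((hasDerivAt_id a).mul_const b)).add_const
      (b * c)).add_const (c ^ 2 / 2)
    refine this.congr_deriv ?_
    simp
  have h3 : HasDerivAt (fun w : ℂ => -(π:ℂ) * w + (π:ℂ) * c) (-(π:ℂ)) a := by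
    have := ((hasDerivAt_id a).const_mul (-(π:ℂ))).add_const ((π:ℂ) * c)
    refine this.congr_deriv ?_
    simp
  have h4 := (Li2_exp_hasDerivAt h).const_mul Complex.I
  have H := ((((h1.const_mul Complex.I).add h3).add h4).sub_const
      (Complex.I * Li2 (-Complex.exp b))).add_const (3 * Complex.I * Li2 (-Complex.exp c))
  refine H.congr_deriv ?_
  ring

lemma pot_hasDerivAt₂ (a b c : ℂ) (h : (Complex.exp b).im ≠ 0) :
    HasDerivAt (fun w => pot a w c)
      (Complex.I * (c - a) + Complex.I * Complex.log (1 + Complex.exp b)) b := by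
  have h1 : HasDerivAt (fun w : ℂ => a ^ 2 - a * w + w * c + c ^ 2 / 2) (c - a) b := by
    have := ((((hasDerivAt_id b).const_mul a).const_sub (a ^ 2)).add
      ((hasDerivAt_id b).mul_const c)).add_const (c ^ 2 / 2)
    refine this.congr_deriv ?_
    simp; ring
  have h4 := (Li2_exp_hasDerivAt h).const_mul Complex.I
  have H := ((((h1.const_mul Complex.I).add_const (-(π:ℂ) * a + (π:ℂ) * c)).add_const
      (Complex.I * Li2 (-Complex.exp a))).sub h4).add_const
      (3 * Complex.I * Li2 (-Complex.exp c))
  refine H.congr_deriv ?_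
  ring

lemma pot_hasDerivAt₃ (a b c : ℂ) (h : (Complex.exp c).im ≠ 0) :
    HasDerivAt (fun w => pot a b w)
      (Complex.I * (b + c) + (π:ℂ) - 3 * Complex.I * Complex.log (1 + Complex.exp c)) c := by
  have h1 : HasDerivAt (fun w : ℂ => a ^ 2 - a * b + b * w + w ^ 2 / 2) (b + c) c := by
    have := (((hasDerivAt_id c).const_mul b).const_add (a ^ 2 - a * b)).add
      ((hasDerivAt_pow 2 c).div_const 2)
    refine this.congr_deriv ?_
    simp
  have h3 : HasDerivAt (fun w : ℂ => -(π:ℂ) * a + (π:ℂ) * w) ((π:ℂ)) c := by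
    have := ((hasDerivAt_id c).const_mul ((π:ℂ))).const_add (-(π:ℂ) * a)
    refine this.congr_deriv ?_
    simp
  have h4 := (Li2_exp_hasDerivAt h).const_mul (3 * Complex.I)
  have H := ((((h1.const_mul Complex.I).add h3).add_const
      (Complex.I * Li2 (-Complex.exp a))).sub_const
      (Complex.I * Li2 (-Complex.exp b))).add h4
  refine H.congr_deriv ?_
  ring

/-- First/third component of `ψ`: `Log z - iπ`. -/
noncomputable def psiP (z : ℂ) : ℂ := Complex.log z - (π : ℂ) * Complex.I

/-- Second component of `ψ`: `-(Log z - iπ)`. -/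
noncomputable def psiM (z : ℂ) : ℂ := -(Complex.log z - (π : ℂ) * Complex.I)

lemma exp_psiP {z : ℂ} (hz : z ≠ 0) : Complex.exp (psiP z) = -z := by
  rw [psiP, Complex.exp_sub, Complex.exp_log hz, Complex.exp_pi_mul_I]
  field_simp

lemma exp_psiM {z : ℂ} (hz : z ≠ 0) : Complex.exp (psiM z) = -z⁻¹ := by
  rw [psiM, Complex.exp_neg, show Complex.log z - (π:ℂ) * Complex.I = psiP z from rfl,
    exp_psiP hz, inv_neg]

lemma arg_pos_of_im_pos {z : ℂ} (hz : 0 < z.im) : 0 < z.arg :=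
  lt_of_le_of_ne (Complex.arg_nonneg_iff.mpr hz.le)
    (fun h => by have := Complex.arg_eq_zero_iff.mp h.symm; exact hz.ne' this.2)

lemma arg_lt_pi_of_im_pos {z : ℂ} (hz : 0 < z.im) : z.arg < π :=
  Complex.arg_lt_pi_iff.mpr (Or.inr hz.ne')

lemma one_sub_im_neg {z : ℂ} (hz : 0 < z.im) : (1 - z).im < 0 := by
  simpa using hz

lemma log_ratio {z : ℂ} (hz : 0 < z.im) :
    Complex.log ((z - 1) / z) = Complex.log (1 - z) - Complex.log z + (π:ℂ) * Complex.I := by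
  have hz0 : z ≠ 0 := fun h => by simp [h] at hz
  have him : (1 - z).im < 0 := one_sub_im_neg hz
  have h1 : (1 : ℂ) - z ≠ 0 := fun h => by rw [h] at him; simp at him
  set L : ℂ := Complex.log (1 - z) - Complex.log z + (π:ℂ) * Complex.I with hL
  have hexp : Complex.exp L = (z - 1) / z := by
    rw [hL, Complex.exp_add, Complex.exp_sub, Complex.exp_log h1, Complex.exp_log hz0,
      Complex.exp_pi_mul_I]
    field_simp
    ring
  have hIm : L.im = (1 - z).arg - z.arg + π := by
    simp [hL, Complex.add_im, Complex.sub_im, Complex.log_im]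
  have harg1 : (1 - z).arg < 0 := Complex.arg_neg_iff.mpr him
  have harg1' : -π < (1 - z).arg := Complex.neg_pi_lt_arg _
  have harg2 : 0 < z.arg := arg_pos_of_im_pos hz
  have harg2' : z.arg < π := arg_lt_pi_of_im_pos hz
  have hlow : -π < L.im := by rw [hIm]; linarith
  have hupp : L.im ≤ π := by rw [hIm]; linarith
  rw [← hexp, Complex.log_exp hlow hupp]

lemma log_one_div {z : ℂ} (hz : 0 < z.im) :
    Complex.log (1 / (1 - z)) = -Complex.log (1 - z) := by
  rw [one_div, Complex.log_inv]
  intro h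
  have := Complex.arg_eq_pi_iff.mp h
  have him : (1 - z).im < 0 := one_sub_im_neg hz
  rw [this.2] at him
  exact lt_irrefl 0 him

/-- for `(z₁,z₂,z₃) ∈ ℍ³`, `ψ(z₁,z₂,z₃) ∈ 𝒰`, and `∇S` vanishes
at `ψ(z₁,z₂,z₃)` iff the equations (E1), (E2), (E3) hold. -/
theorem critical_point_iff_gluing (z₁ z₂ z₃ : ℂ)
    (h₁ : 0 < z₁.im) (h₂ : 0 < z₂.im) (h₃ : 0 < z₃.im) :
    ((psiP z₁).im ∈ Set.Ioo (-π) 0 ∧ (psiM z₂).im ∈ Set.Ioo 0 π ∧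
      (psiP z₃).im ∈ Set.Ioo (-π) 0) ∧
    ((deriv (fun w => pot w (psiM z₂) (psiP z₃)) (psiP z₁) = 0 ∧
      deriv (fun w => pot (psiP z₁) w (psiP z₃)) (psiM z₂) = 0 ∧
      deriv (fun w => pot (psiP z₁) (psiM z₂) w) (psiP z₃) = 0) ↔
     (Complex.log z₃ =
        Complex.log ((z₁ - 1) / z₁) + Complex.log (1 / (1 - z₂)) ∧
      Complex.log z₃ = Complex.log z₁ - Complex.log ((z₂ - 1) / z₂) ∧
      Complex.log z₁ + Complex.log (1 / (1 - z₂)) +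
        3 * Complex.log (1 / (1 - z₃)) = 2 * (π : ℂ) * Complex.I)) := by
  have h10 : z₁ ≠ 0 := fun h => by simp [h] at h₁
  have h20 : z₂ ≠ 0 := fun h => by simp [h] at h₂
  have h30 : z₃ ≠ 0 := fun h => by simp [h] at h₃
  have hm1 : (psiP z₁).im = z₁.arg - π := by simp [psiP, Complex.log_im]
  have hm2 : (psiM z₂).im = π - z₂.arg := by simp [psiM, Complex.log_im]
  have hm3 : (psiP z₃).im = z₃.arg - π := by simp [psiP, Complex.log_im]
  constructor
  · refine ⟨?_, ?_, ?_⟩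
    · rw [hm1]
      exact ⟨by linarith [arg_pos_of_im_pos h₁], by linarith [arg_lt_pi_of_im_pos h₁]⟩
    · rw [hm2]
      exact ⟨by linarith [arg_lt_pi_of_im_pos h₂], by linarith [arg_pos_of_im_pos h₂]⟩
    · rw [hm3]
      exact ⟨by linarith [arg_pos_of_im_pos h₃], by linarith [arg_lt_pi_of_im_pos h₃]⟩
  · have he1 : Complex.exp (psiP z₁) = -z₁ := exp_psiP h10
    have he2 : Complex.exp (psiM z₂) = -z₂⁻¹ := exp_psiM h20
    have he3 : Complex.exp (psiP z₃) = -z₃ := exp_psiP h30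
    have him1 : (Complex.exp (psiP z₁)).im ≠ 0 := by rw [he1]; simpa using h₁.ne'
    have him3 : (Complex.exp (psiP z₃)).im ≠ 0 := by rw [he3]; simpa using h₃.ne'
    have him2 : (Complex.exp (psiM z₂)).im ≠ 0 := by
      have him2' : (-z₂⁻¹).im = z₂.im / Complex.normSq z₂ := by
        simp [Complex.inv_im]
        ring
      rw [he2, him2']
      exact div_ne_zero h₂.ne' ((Complex.normSq_pos.mpr h20).ne')
    have hone1 : 1 + Complex.exp (psiP z₁) = 1 - z₁ := by rw [he1]; ring
    have hone3 : 1 + Complex.exp (psiP z₃) = 1 - z₃ := by rw [he3]; ring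
    have hone2 : 1 + Complex.exp (psiM z₂) = (z₂ - 1) / z₂ := by
      rw [he2]; field_simp; ring
    have hD1 : deriv (fun w => pot w (psiM z₂) (psiP z₃)) (psiP z₁)
        = Complex.I * (2 * psiP z₁ - psiM z₂) - (π:ℂ)
          - Complex.I * Complex.log (1 - z₁) := by
      rw [(pot_hasDerivAt₁ _ (psiM z₂) (psiP z₃) him1).deriv, hone1]
    have hD2 : deriv (fun w => pot (psiP z₁) w (psiP z₃)) (psiM z₂)
        = Complex.I * (psiP z₃ - psiP z₁)
          + Complex.I * Complex.log ((z₂ - 1) / z₂) := by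
      rw [(pot_hasDerivAt₂ (psiP z₁) _ (psiP z₃) him2).deriv, hone2]
    have hD3 : deriv (fun w => pot (psiP z₁) (psiM z₂) w) (psiP z₃)
        = Complex.I * (psiM z₂ + psiP z₃) + (π:ℂ)
          - 3 * Complex.I * Complex.log (1 - z₃) := by
      rw [(pot_hasDerivAt₃ (psiP z₁) (psiM z₂) _ him3).deriv, hone3]
    have hb1 := log_ratio h₁
    have hb2 := log_ratio h₂
    have hc2 := log_one_div h₂
    have hc3 := log_one_div h₃
    have isq := Complex.I_sq
    rw [hD1, hD2, hD3]
    simp only [psiP, psiM]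
    constructor
    · rintro ⟨e1, e2, e3⟩
      refine ⟨?_, ?_, ?_⟩
      · linear_combination (-Complex.I) * e1 + (-Complex.I) * e2 - hb1 - hb2 - hc2 +
          (Complex.log z₃ + Complex.log z₁ + Complex.log z₂ + Complex.log ((z₂ - 1) / z₂)
            - Complex.log (1 - z₁) - 3 * (π:ℂ) * Complex.I) * isq
      · linear_combination (-Complex.I) * e2 +
          (Complex.log z₃ - Complex.log z₁ + Complex.log ((z₂ - 1) / z₂)) * isq
      · linear_combination (-Complex.I) * e3 + Complex.I * e2 + hb2 + hc2 + 3 * hc3 +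
          (Complex.log z₁ - Complex.log z₂ - 3 * Complex.log (1 - z₃)
            - Complex.log ((z₂ - 1) / z₂)) * isq
    · rintro ⟨g1, g2, g3⟩
      refine ⟨?_, ?_, ?_⟩
      · linear_combination Complex.I * g1 - Complex.I * g2 + Complex.I * hb1
          + Complex.I * hb2 + Complex.I * hc2 + (-(π:ℂ)) * isq
      · linear_combination Complex.I * g2
      · linear_combination Complex.I * g3 + Complex.I * g2 - Complex.I * hb2
          - Complex.I * hc2 - 3 * Complex.I * hc3 + (π:ℂ) * isq
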